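/- For the pendulum on a cart, the interior impact map in momentum coordinates, p_θ ↦ −p_θ + (2mℓ/(M+m)) p_x cos θ, p_x ↦ p_x, preserves the Hamiltonian kinetic energy H(p_θ, p_x) = ½ (p_θ, p_x) g_θ⁻¹ (p_θ, p_x)ᵀ, where g_θ is the mass matrix with entries g₁₁ = mℓ², g₁₂ = g₂₁ = mℓ cos θ, g₂₂ = M+m, provided det g_θ ≠ 0. -/

import Mathlib

open Matrix
theorem interior_impact_preserves_hamiltonian
    (m M l θ : ℝ) (hm : 0 < m) (hM : 0 < M) (hl : 0 < l)
    (hdet : m * l^2 * (M + m) - m^2 * l^2 * (Real.cos θ)^2 ≠ 0)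
    (g : Matrix (Fin 2) (Fin 2) ℝ)
    (hg : g = !![m * l^2, m * l * Real.cos θ; m * l * Real.cos θ, M + m])
    (H : (Fin 2 → ℝ) → ℝ)
    (hH : ∀ p : Fin 2 → ℝ, H p = (1/2) * (p ⬝ᵥ (g⁻¹).mulVec p))
    (Δ : (Fin 2 → ℝ) → (Fin 2 → ℝ))
    (hΔ : ∀ p : Fin 2 → ℝ,
      Δ p = ![-p 0 + (2 * m * l / (M + m)) * p 1 * Real.cos θ, p 1]) :
    ∀ p : Fin 2 → ℝ, H (Δ p) = H p := by
  intro p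
  have hdet' : g.det = m * l^2 * (M + m) - m^2 * l^2 * (Real.cos θ)^2 := by
    rw [hg, Matrix.det_fin_two_of]; ring
  have hMm : M + m ≠ 0 := by positivity
  have hginv : g⁻¹ = (m * l^2 * (M + m) - m^2 * l^2 * (Real.cos θ)^2)⁻¹ •
      !![M + m, -(m * l * Real.cos θ); -(m * l * Real.cos θ), m * l^2] := by
    rw [Matrix.inv_def, hdet', Ring.inverse_eq_inv, hg, Matrix.adjugate_fin_two_of]
  rw [hH, hH, hΔ, hginv]
  simp only [Matrix.smul_mulVec, Matrix.mulVec, dotProduct,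
    Fin.sum_univ_two, Matrix.cons_val', Matrix.cons_val_zero, Matrix.cons_val_one,
    Matrix.head_cons, Matrix.empty_val', Matrix.cons_val_fin_one, Matrix.head_fin_const,
    Pi.smul_apply, smul_eq_mul, Matrix.smul_apply, Matrix.of_apply]
  field_simp
  ring
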